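/- arXiv:2209.03477 — 2 statements merged into one kernel-verified Lean document; each statement's English description precedes it below -/
import Mathlib

section
/- Let D = ⊕_{i∈I} C_i ⊕ T be a direct sum of chains where T is the (nonempty) direct sum of the trivial components, |T| = λ > 0, and the C_i are the non-trivial components. Then there exist λ pairwise disjoint infinite increasing (under embeddability) sequences of non-trivial components of D if and only if D embeds into ⊕_{i∈I} C_i. In this case D has infinitely many siblings up to isomorphism. -/
open Cardinal

/-- Two preorders are equimorphic (siblings) if each order-embeds into the other. -/
def Equimorphic (α : Type*) (β : Type*) [Preorder α] [Preorder β] : Prop :=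
  Nonempty (α ↪o β) ∧ Nonempty (β ↪o α)

/-- The setoid identifying order-isomorphic equimorphic substructures. -/
def sibSetoid (α : Type*) [Preorder α] : Setoid {S : Set α // Equimorphic S α} :=
  ⟨fun S T => Nonempty ((S : Set α) ≃o (T : Set α)),
    ⟨fun _ => ⟨OrderIso.refl _⟩, fun ⟨e⟩ => ⟨e.symm⟩, fun ⟨e⟩ ⟨f⟩ => ⟨e.trans f⟩⟩⟩

/-- The sibling number of a structure: the number of isomorphism classes of
substructures equimorphic to it (every sibling is isomorphic to such a substructure). -/
noncomputable def sibNumber (α : Type*) [Preorder α] : Cardinal :=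
  #(Quotient (sibSetoid α))

namespace SibAux
universe u

variable {ι κ : Type*}

lemma sigma_le_cases {A : ι → Type*} [∀ i, LE (A i)] {x y : Σ i, A i} (h : x ≤ y)
    {P : Prop} (H : ∀ i (a b : A i), x = ⟨i, a⟩ → y = ⟨i, b⟩ → a ≤ b → P) : P := by
  obtain ⟨i, a⟩ := x; obtain ⟨j, b⟩ := y
  obtain ⟨h1, h2⟩ := Sigma.le_def.mp h
  dsimp at h1 h2
  subst h1
  exact H i a b rfl rfl h2

lemma sigma_fst_eq_of_le {A : ι → Type*} [∀ i, LE (A i)] {x y : Σ i, A i} (h : x ≤ y) :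
    x.1 = y.1 :=
  (Sigma.le_def.mp h).choose

lemma sigma_eta {B : κ → Type*} (x : Σ k, B k) {k : κ} (h : x.1 = k) :
    x = ⟨k, cast (congrArg B h) x.2⟩ := by
  cases x; cases h; rfl

lemma sigma_comparable {B : κ → Type*} [∀ k, LinearOrder (B k)] {x y : Σ k, B k}
    (h : x.1 = y.1) : x ≤ y ∨ y ≤ x := by
  obtain ⟨k, a⟩ := x; obtain ⟨l, b⟩ := y
  dsimp at h; subst h
  rcases le_total a b with h | h
  · exact Or.inl (Sigma.mk_le_mk_iff.mpr h)
  · exact Or.inr (Sigma.mk_le_mk_iff.mpr h)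

def castOrderIso (C : ι → Type*) [∀ i, Preorder (C i)] : ∀ {i j : ι}, i = j → (C i ≃o C j)
  | _, _, rfl => OrderIso.refl _

/-- L1: build a sigma embedding from an injective index map plus fiber embeddings. -/
def sigmaEmb {A : ι → Type*} {B : κ → Type*} [∀ i, PartialOrder (A i)] [∀ k, Preorder (B k)]
    (m : ι → κ) (hm : Function.Injective m) (f : ∀ i, A i ↪o B (m i)) :
    (Σ i, A i) ↪o Σ k, B k :=
  OrderEmbedding.ofMapLEIff (fun x => ⟨m x.1, f x.1 x.2⟩) (by
    rintro ⟨i, a⟩ ⟨j, b⟩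
    constructor
    · intro h
      refine sigma_le_cases h ?_
      rintro k x y h1 h2 hxy
      injection h1 with hk1 hx
      subst hk1
      injection h2 with hk2 hy
      obtain rfl := hm hk2.symm
      obtain rfl := eq_of_heq hx
      obtain rfl := eq_of_heq hy
      exact Sigma.mk_le_mk_iff.mpr ((f i).le_iff_le.mp hxy)
    · intro h
      refine sigma_le_cases h ?_
      rintro k x y h1 h2 hxy
      injection h1 with hk1 hx
      subst hk1
      injection h2 with hk2 hy
      subst hk2
      obtain rfl := eq_of_heq hx
      obtain rfl := eq_of_heq hy
      exact Sigma.mk_le_mk_iff.mpr ((f _).monotone hxy))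

/-- L2: decompose a sigma embedding into an injective index map plus fiber embeddings. -/
lemma sigmaDecomp {A : ι → Type*} {B : κ → Type*} [∀ i, LinearOrder (A i)] [∀ i, Nonempty (A i)]
    [∀ k, LinearOrder (B k)] (e : (Σ i, A i) ↪o Σ k, B k) :
    ∃ m : ι → κ, Function.Injective m ∧ ∀ i, Nonempty (A i ↪o B (m i)) := by
  classical
  have key : ∀ i (a : A i), (e ⟨i, a⟩).1 = (e ⟨i, Classical.arbitrary (A i)⟩).1 := by
    intro i a
    rcases le_total a (Classical.arbitrary (A i)) with h | h
    · exact sigma_fst_eq_of_le (e.monotone (Sigma.mk_le_mk_iff.mpr h))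
    · exact (sigma_fst_eq_of_le (e.monotone (Sigma.mk_le_mk_iff.mpr h))).symm
  refine ⟨fun i => (e ⟨i, Classical.arbitrary (A i)⟩).1, ?_, ?_⟩
  · intro i j hij
    dsimp at hij
    have hcomp := sigma_comparable (x := e ⟨i, Classical.arbitrary (A i)⟩)
      (y := e ⟨j, Classical.arbitrary (A j)⟩) hij
    rcases hcomp with h | h
    · exact sigma_fst_eq_of_le (e.le_iff_le.mp h)
    · exact (sigma_fst_eq_of_le (e.le_iff_le.mp h)).symm
  · intro i
    show Nonempty (A i ↪o B ((e ⟨i, Classical.arbitrary (A i)⟩).1))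
    refine ⟨OrderEmbedding.ofMapLEIff (fun a => cast (congrArg B (key i a)) (e ⟨i, a⟩).2) ?_⟩
    intro a b
    have h1 := sigma_eta (e ⟨i, a⟩) (key i a)
    have h2 := sigma_eta (e ⟨i, b⟩) (key i b)
    constructor
    · intro h
      have hle : e ⟨i, a⟩ ≤ e ⟨i, b⟩ := by
        rw [h1, h2]; exact Sigma.mk_le_mk_iff.mpr h
      exact Sigma.mk_le_mk_iff.mp (e.le_iff_le.mp hle)
    · intro h
      have hle : e ⟨i, a⟩ ≤ e ⟨i, b⟩ := e.monotone (Sigma.mk_le_mk_iff.mpr h)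
      rw [h1, h2] at hle
      exact Sigma.mk_le_mk_iff.mp hle

instance sumElimLinearOrder {A : ι → Type u} {B : κ → Type u} [∀ i, LinearOrder (A i)]
    [∀ k, LinearOrder (B k)] : ∀ x : ι ⊕ κ, LinearOrder (Sum.elim A B x)
  | .inl i => inferInstanceAs (LinearOrder (A i))
  | .inr k => inferInstanceAs (LinearOrder (B k))

instance sumElimNonempty {A : ι → Type u} {B : κ → Type u} [∀ i, Nonempty (A i)]
    [∀ k, Nonempty (B k)] : ∀ x : ι ⊕ κ, Nonempty (Sum.elim A B x)
  | .inl i => inferInstanceAs (Nonempty (A i))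
  | .inr k => inferInstanceAs (Nonempty (B k))


def inlEmb (α β : Type*) [Preorder α] [Preorder β] : α ↪o α ⊕ β :=
  ⟨⟨Sum.inl, Sum.inl_injective⟩, fun {_ _} => Sum.inl_le_inl_iff⟩

noncomputable def punitEmb (β : Type*) [Preorder β] [Nonempty β] : PUnit ↪o β :=
  OrderEmbedding.ofMapLEIff (fun _ => Classical.arbitrary β)
    (fun a b => ⟨fun _ => le_of_eq (congrArg id (Subsingleton.elim a b)), fun _ => le_rfl⟩)

noncomputable def rangeOrderIso {α β : Type*} [Preorder α] [Preorder β] (f : α ↪o β) :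
    α ≃o Set.range f :=
  { Equiv.ofInjective f f.injective with
    map_rel_iff' := fun {a b} => by
      simp only [Equiv.ofInjective_apply, Subtype.mk_le_mk]
      exact f.le_iff_le }

/-- L3: a disjoint sum of two sigma orders is a sigma order over the sum of index types. -/
def sumSigmaOrderIso (A : ι → Type u) (B : κ → Type u) [∀ i, LinearOrder (A i)]
    [∀ k, LinearOrder (B k)] :
    ((Σ i, A i) ⊕ (Σ k, B k)) ≃o Σ x : ι ⊕ κ, Sum.elim A B x where
  toFun := Sum.elim (fun p => ⟨Sum.inl p.1, p.2⟩) (fun p => ⟨Sum.inr p.1, p.2⟩)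
  invFun x := match x with
    | ⟨.inl i, a⟩ => Sum.inl ⟨i, a⟩
    | ⟨.inr k, b⟩ => Sum.inr ⟨k, b⟩
  left_inv := by rintro (⟨i, a⟩ | ⟨k, b⟩) <;> rfl
  right_inv := by rintro ⟨(i | k), x⟩ <;> rfl
  map_rel_iff' := by
    rintro (⟨i, a⟩ | ⟨k, b⟩) (⟨j, c⟩ | ⟨l, d⟩)
    · constructor
      · intro h
        refine sigma_le_cases h ?_
        rintro x u v h1 h2 huv
        injection h1 with hx hu
        subst hx
        injection h2 with hy hv
        obtain rfl := (Sum.inl.inj hy)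
        obtain rfl := eq_of_heq hu
        obtain rfl := eq_of_heq hv
        exact Sum.inl_le_inl_iff.mpr (Sigma.mk_le_mk_iff.mpr huv)
      · intro h
        refine sigma_le_cases (Sum.inl_le_inl_iff.mp h) ?_
        rintro x u v h1 h2 huv
        injection h1 with hx hu
        subst hx
        injection h2 with hy hv
        obtain rfl := hy
        obtain rfl := eq_of_heq hu
        obtain rfl := eq_of_heq hv
        exact Sigma.mk_le_mk_iff.mpr huv
    · constructor
      · intro h
        exact absurd (sigma_fst_eq_of_le h) (by simp)
      · intro h
        exact absurd h Sum.not_inl_le_inr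
    · constructor
      · intro h
        exact absurd (sigma_fst_eq_of_le h) (by simp)
      · intro h
        exact absurd h Sum.not_inr_le_inl
    · constructor
      · intro h
        refine sigma_le_cases h ?_
        rintro x u v h1 h2 huv
        injection h1 with hx hu
        subst hx
        injection h2 with hy hv
        obtain rfl := (Sum.inr.inj hy)
        obtain rfl := eq_of_heq hu
        obtain rfl := eq_of_heq hv
        exact Sum.inr_le_inr_iff.mpr (Sigma.mk_le_mk_iff.mpr huv)
      · intro h
        refine sigma_le_cases (Sum.inr_le_inr_iff.mp h) ?_
        rintro x u v h1 h2 huv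
        injection h1 with hx hu
        subst hx
        injection h2 with hy hv
        obtain rfl := hy
        obtain rfl := eq_of_heq hu
        obtain rfl := eq_of_heq hv
        exact Sigma.mk_le_mk_iff.mpr huv

lemma iterate_inj {α : Type*} {φ : α → α} (hφ : Function.Injective φ) {x y : α}
    (hx : x ∉ Set.range φ) (hy : y ∉ Set.range φ) :
    ∀ n m : ℕ, φ^[n] x = φ^[m] y → n = m ∧ x = y := by
  intro n
  induction n with
  | zero =>
    intro m h
    cases m with
    | zero => exact ⟨rfl, h⟩
    | succ m =>
      rw [Function.iterate_succ_apply'] at h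
      exact absurd ⟨φ^[m] y, h.symm⟩ hx
  | succ n ih =>
    intro m h
    cases m with
    | zero =>
      rw [Function.iterate_succ_apply'] at h
      exact absurd ⟨φ^[n] x, h⟩ hy
    | succ m =>
      rw [Function.iterate_succ_apply', Function.iterate_succ_apply'] at h
      obtain ⟨h1, h2⟩ := ih m (hφ h)
      exact ⟨by omega, h2⟩

/-- A point is isolated if it is comparable to nothing but itself. -/
def IsIsol {γ : Type*} [Preorder γ] (x : γ) : Prop := ∀ y, (x ≤ y ∨ y ≤ x) → y = x

lemma IsIsol.map {γ δ : Type*} [Preorder γ] [Preorder δ] (f : γ ≃o δ) {x : γ}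
    (h : IsIsol x) : IsIsol (f x) := by
  intro y hy
  have h2 : f.symm y = x := by
    apply h
    rcases hy with h' | h'
    · left; rw [← f.le_iff_le]; simpa using h'
    · right; rw [← f.le_iff_le]; simpa using h'
  rw [← h2, OrderIso.apply_symm_apply]

def isolEquiv {γ δ : Type*} [Preorder γ] [Preorder δ] (f : γ ≃o δ) :
    {x : γ // IsIsol x} ≃ {y : δ // IsIsol y} :=
  f.toEquiv.subtypeEquiv (fun x =>
    ⟨fun h => h.map f, fun h => by simpa using h.map f.symm⟩)

lemma isol_fin {ι' : Type*} (A : ι' → Type*) [∀ i, LinearOrder (A i)] [∀ i, Nontrivial (A i)]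
    (k : ℕ) :
    Nonempty ({x : (Σ i, A i) ⊕ (Σ _ : Fin k, PUnit) // IsIsol x} ≃ Fin k) := by
  have hiso : ∀ j : Fin k,
      IsIsol (Sum.inr ⟨j, PUnit.unit⟩ : (Σ i, A i) ⊕ (Σ _ : Fin k, PUnit)) := by
    intro j y hy
    rcases y with y | ⟨j', u⟩
    · rcases hy with h | h
      · exact absurd h Sum.not_inr_le_inl
      · exact absurd h Sum.not_inl_le_inr
    · have hj : j' = j := by
        rcases hy with h | h
        · exact (sigma_fst_eq_of_le (Sum.inr_le_inr_iff.mp h)).symm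
        · exact sigma_fst_eq_of_le (Sum.inr_le_inr_iff.mp h)
      subst hj
      cases u; rfl
  refine ⟨(Equiv.ofBijective
      (fun j : Fin k => (⟨Sum.inr ⟨j, PUnit.unit⟩, hiso j⟩ : {x // IsIsol x})) ⟨?_, ?_⟩).symm⟩
  · intro a b h
    have h2 : (Sum.inr ⟨a, PUnit.unit⟩ : (Σ i, A i) ⊕ (Σ _ : Fin k, PUnit))
        = Sum.inr ⟨b, PUnit.unit⟩ := congrArg Subtype.val h
    exact congrArg Sigma.fst (Sum.inr.inj h2)
  · rintro ⟨(⟨i, a⟩ | ⟨j, u⟩), hx⟩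
    · exfalso
      obtain ⟨b, hb⟩ := exists_ne a
      have hcomp : ((Sum.inl ⟨i, a⟩ : (Σ i, A i) ⊕ (Σ _ : Fin k, PUnit)) ≤ Sum.inl ⟨i, b⟩)
          ∨ ((Sum.inl ⟨i, b⟩ : (Σ i, A i) ⊕ (Σ _ : Fin k, PUnit)) ≤ Sum.inl ⟨i, a⟩) := by
        rcases le_total a b with h | h
        · exact Or.inl (Sum.inl_le_inl_iff.mpr (Sigma.mk_le_mk_iff.mpr h))
        · exact Or.inr (Sum.inl_le_inl_iff.mpr (Sigma.mk_le_mk_iff.mpr h))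
      have heq := hx _ hcomp
      have hba := Sum.inl.inj heq
      injection hba with h1 h2
      exact hb h2
    · exact ⟨j, Subtype.ext (by cases u; rfl)⟩


universe v w

def sumOrderIsoCongr {α β γ δ : Type*} [Preorder α] [Preorder β] [Preorder γ] [Preorder δ]
    (f : α ≃o γ) (g : β ≃o δ) : α ⊕ β ≃o γ ⊕ δ where
  toEquiv := Equiv.sumCongr f.toEquiv g.toEquiv
  map_rel_iff' := by
    rintro (a | b) (a' | b') <;>
      simp [Equiv.sumCongr_apply, Sum.map, f.le_iff_le, g.le_iff_le]

def punitSigmaIso (T : Type) : (Σ _ : T, PUnit.{v+1}) ≃o (Σ _ : T, PUnit.{1}) where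
  toFun x := ⟨x.1, PUnit.unit⟩
  invFun x := ⟨x.1, PUnit.unit⟩
  left_inv := by rintro ⟨t, ⟨⟩⟩; rfl
  right_inv := by rintro ⟨t, ⟨⟩⟩; rfl
  map_rel_iff' := by
    rintro ⟨t, u⟩ ⟨t', u'⟩
    constructor
    · intro h
      have ht := sigma_fst_eq_of_le h
      dsimp at ht; subst ht
      cases u; cases u'
      exact Sigma.mk_le_mk_iff.mpr le_rfl
    · intro h
      have ht := sigma_fst_eq_of_le h
      dsimp at ht; subst ht
      exact Sigma.mk_le_mk_iff.mpr le_rfl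

section Part2

variable {I : Type} (C : I → Type) [∀ i, LinearOrder (C i)] [∀ i, Nonempty (C i)]
  (s : ℕ → I)

/-- Index type with the first `k` members of the sequence `s` removed. -/
abbrev SubIdx (k : ℕ) : Type := {i : I // ∀ j, j < k → i ≠ s j}

/-- The sibling candidate: all components except the first `k` of the chain `s`,
plus `k` singletons. -/
abbrev DkT (k : ℕ) : Type := (Σ i : SubIdx s k, C i.1) ⊕ (Σ _ : Fin k, PUnit)

noncomputable def dkEmb (hs : Function.Injective s) (k : ℕ) : DkT C s k ↪o Σ i, C i :=
  (sumSigmaOrderIso (fun i : SubIdx s k => C i.1) (fun _ : Fin k => PUnit)).toOrderEmbedding.trans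
    (sigmaEmb (Sum.elim (fun i => i.1) (fun j : Fin k => s j.1))
      (by
        rintro (i | j) (i' | j') h <;> dsimp at h
        · exact congrArg Sum.inl (Subtype.ext h)
        · exact absurd h (i.2 j'.1 j'.2)
        · exact absurd h.symm (i'.2 j.1 j.2)
        · exact congrArg Sum.inr (Fin.ext (hs h)))
      (fun x => match x with
        | .inl i => (OrderIso.refl (C i.1)).toOrderEmbedding
        | .inr j => punitEmb (C (s j.1))))

open Classical in
noncomputable def MFun (hs : Function.Injective s) (k : ℕ) : I → SubIdx s k := fun i =>
  if h : ∃ n, i = s n then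
    ⟨s (h.choose + k), by
      intro j hj heq
      have := hs heq
      omega⟩
  else ⟨i, fun j _ heq => h ⟨j, heq⟩⟩

lemma MFun_inj (hs : Function.Injective s) (k : ℕ) : Function.Injective (MFun s hs k) := by
  intro a b hab
  have hv := congrArg Subtype.val hab
  by_cases ha : ∃ n, a = s n <;> by_cases hb : ∃ n, b = s n
  · simp only [MFun] at hv; rw [dif_pos ha, dif_pos hb] at hv
    dsimp at hv
    have h1 : ha.choose + k = hb.choose + k := hs hv
    rw [ha.choose_spec, hb.choose_spec]
    congr 1
    omega
  · simp only [MFun] at hv; rw [dif_pos ha, dif_neg hb] at hv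
    exact absurd ⟨ha.choose + k, hv.symm⟩ hb
  · simp only [MFun] at hv; rw [dif_pos hb, dif_neg ha] at hv
    exact absurd ⟨hb.choose + k, hv⟩ ha
  · simp only [MFun] at hv; rw [dif_neg ha, dif_neg hb] at hv
    exact hv

noncomputable def alphaToDk (hs : Function.Injective s)
    (hchain : ∀ a b : ℕ, a ≤ b → Nonempty (C (s a) ↪o C (s b))) (k : ℕ) :
    (Σ i, C i) ↪o DkT C s k :=
  (sigmaEmb (B := fun i' : SubIdx s k => C i'.1) (MFun s hs k) (MFun_inj s hs k)
    (fun i => by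
      by_cases h : ∃ n, i = s n
      · have hv : (MFun s hs k i).1 = s (h.choose + k) := by
          simp only [MFun]; rw [dif_pos h]
        show C i ↪o C (MFun s hs k i).1
        exact ((castOrderIso C h.choose_spec).toOrderEmbedding.trans
          (hchain h.choose (h.choose + k) (Nat.le_add_right _ _)).some).trans
          (castOrderIso C hv.symm).toOrderEmbedding
      · have hv : (MFun s hs k i).1 = i := by
          simp only [MFun]; rw [dif_neg h]
        show C i ↪o C (MFun s hs k i).1
        exact (castOrderIso C hv.symm).toOrderEmbedding)).trans
    (inlEmb _ _)

end Part2

end SibAux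

namespace SibAux

variable {I T : Type} (C : I → Type) [∀ i, LinearOrder (C i)] [∀ i, Nonempty (C i)]

lemma bwd0 (e : ((Σ i, C i) ⊕ (Σ _ : T, PUnit.{1})) ↪o Σ i, C i) :
    ∃ g : T → ℕ → I,
      Function.Injective (fun p : T × ℕ => g p.1 p.2) ∧
      ∀ (t : T) (n : ℕ), Nonempty (C (g t n) ↪o C (g t (n + 1))) := by
  classical
  obtain ⟨m, hm, hemb⟩ := sigmaDecomp
    ((sumSigmaOrderIso C (fun _ : T => PUnit)).symm.toOrderEmbedding.trans e)
  have hφ : Function.Injective (fun i : I => m (Sum.inl i)) := by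
    intro a b h
    exact Sum.inl.inj (hm h)
  have hrange : ∀ t : T, m (Sum.inr t) ∉ Set.range (fun i : I => m (Sum.inl i)) := by
    rintro t ⟨i, hi⟩
    exact Sum.inl_ne_inr (hm hi)
  refine ⟨fun t n => (fun i : I => m (Sum.inl i))^[n] (m (Sum.inr t)), ?_, ?_⟩
  · rintro ⟨t, n⟩ ⟨t', n'⟩ h
    dsimp at h
    obtain ⟨h1, h2⟩ := iterate_inj hφ (hrange t) (hrange t') n n' h
    have h3 : t = t' := Sum.inr.inj (hm h2)
    simp [Prod.ext_iff, h1, h3]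
  · intro t n
    show Nonempty (C ((fun i : I => m (Sum.inl i))^[n] (m (Sum.inr t))) ↪o
      C ((fun i : I => m (Sum.inl i))^[n + 1] (m (Sum.inr t))))
    rw [Function.iterate_succ_apply']
    exact hemb (Sum.inl ((fun i : I => m (Sum.inl i))^[n] (m (Sum.inr t))))

lemma fwd0 (g : T → ℕ → I) (hginj : Function.Injective (fun p : T × ℕ => g p.1 p.2))
    (hgemb : ∀ (t : T) (n : ℕ), Nonempty (C (g t n) ↪o C (g t (n + 1)))) :
    Nonempty (((Σ i, C i) ⊕ (Σ _ : T, PUnit.{1})) ↪o Σ i, C i) := by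
  classical
  have hpair : ∀ {t n t' n'}, g t n = g t' n' → t = t' ∧ n = n' := by
    intro t n t' n' h
    have h2 := hginj (a₁ := (t, n)) (a₂ := (t', n')) h
    exact ⟨congrArg Prod.fst h2, congrArg Prod.snd h2⟩
  let m : I ⊕ T → I := fun x => match x with
    | .inl i => if h : ∃ p : T × ℕ, g p.1 p.2 = i then g h.choose.1 (h.choose.2 + 1) else i
    | .inr t => g t 0
  have hminl_pos : ∀ i (h : ∃ p : T × ℕ, g p.1 p.2 = i),
      m (Sum.inl i) = g h.choose.1 (h.choose.2 + 1) := fun i h => dif_pos h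
  have hminl_neg : ∀ i, ¬(∃ p : T × ℕ, g p.1 p.2 = i) → m (Sum.inl i) = i :=
    fun i h => dif_neg h
  have hm : Function.Injective m := by
    rintro (i | t) (j | t') h
    · by_cases hi : ∃ p : T × ℕ, g p.1 p.2 = i <;>
        by_cases hj : ∃ p : T × ℕ, g p.1 p.2 = j
      · rw [hminl_pos i hi, hminl_pos j hj] at h
        obtain ⟨h1, h2⟩ := hpair h
        have h2' : hi.choose.2 = hj.choose.2 := by omega
        have : i = j := by rw [← hi.choose_spec, ← hj.choose_spec, h1, h2']
        exact congrArg Sum.inl this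
      · rw [hminl_pos i hi, hminl_neg j hj] at h
        exact absurd ⟨(hi.choose.1, hi.choose.2 + 1), h⟩ hj
      · rw [hminl_neg i hi, hminl_pos j hj] at h
        exact absurd ⟨(hj.choose.1, hj.choose.2 + 1), h.symm⟩ hi
      · rw [hminl_neg i hi, hminl_neg j hj] at h
        exact congrArg Sum.inl h
    · exfalso
      by_cases hi : ∃ p : T × ℕ, g p.1 p.2 = i
      · rw [hminl_pos i hi] at h
        obtain ⟨h1, h2⟩ := hpair (h : g _ _ = g t' 0)
        omega
      · rw [hminl_neg i hi] at h
        exact hi ⟨(t', 0), h.symm⟩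
    · exfalso
      by_cases hj : ∃ p : T × ℕ, g p.1 p.2 = j
      · rw [hminl_pos j hj] at h
        obtain ⟨h1, h2⟩ := hpair (h.symm : g _ _ = g t 0)
        omega
      · rw [hminl_neg j hj] at h
        exact hj ⟨(t, 0), h⟩
    · obtain ⟨h1, h2⟩ := hpair (h : g t 0 = g t' 0)
      exact congrArg Sum.inr h1
  have hf : ∀ x, Nonempty (Sum.elim C (fun _ : T => PUnit) x ↪o C (m x)) := by
    rintro (i | t)
    · by_cases hi : ∃ p : T × ℕ, g p.1 p.2 = i
      · refine ⟨?_⟩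
        show C i ↪o C (m (Sum.inl i))
        exact ((castOrderIso C hi.choose_spec.symm).toOrderEmbedding.trans
          (hgemb hi.choose.1 hi.choose.2).some).trans
          (castOrderIso C (hminl_pos i hi).symm).toOrderEmbedding
      · exact ⟨(castOrderIso C (hminl_neg i hi).symm).toOrderEmbedding⟩
    · exact ⟨punitEmb (C (g t 0))⟩
  exact ⟨(sumSigmaOrderIso C (fun _ : T => PUnit)).toOrderEmbedding.trans
    (sigmaEmb m hm (fun x => (hf x).some))⟩

lemma bwd_aux (e : ((Σ i, C i) ⊕ (Σ _ : T, PUnit.{v+1})) ↪o Σ i, C i) :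
    ∃ g : T → ℕ → I,
      Function.Injective (fun p : T × ℕ => g p.1 p.2) ∧
      ∀ (t : T) (n : ℕ), Nonempty (C (g t n) ↪o C (g t (n + 1))) :=
  bwd0 C (((sumOrderIsoCongr (OrderIso.refl (Σ i, C i))
    (punitSigmaIso.{v} T)).symm.toOrderEmbedding).trans e)

lemma fwd_aux (g : T → ℕ → I) (hginj : Function.Injective (fun p : T × ℕ => g p.1 p.2))
    (hgemb : ∀ (t : T) (n : ℕ), Nonempty (C (g t n) ↪o C (g t (n + 1)))) :
    Nonempty (((Σ i, C i) ⊕ (Σ _ : T, PUnit.{v+1})) ↪o Σ i, C i) :=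
  ⟨((sumOrderIsoCongr (OrderIso.refl (Σ i, C i))
      (punitSigmaIso.{v} T)).toOrderEmbedding).trans (fwd0 C g hginj hgemb).some⟩

lemma sib_aux [∀ i, Nontrivial (C i)] (hT : Nonempty T)
    (he : Nonempty (((Σ i, C i) ⊕ (Σ _ : T, PUnit.{w+1})) ↪o Σ i, C i)) :
    Cardinal.aleph0 ≤ sibNumber ((Σ i, C i) ⊕ (Σ _ : T, PUnit.{v+1})) := by
  classical
  have e : ((Σ i, C i) ⊕ (Σ _ : T, PUnit.{v+1})) ↪o Σ i, C i :=
    (((sumOrderIsoCongr (OrderIso.refl (Σ i, C i)) (punitSigmaIso.{v} T)).trans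
      (sumOrderIsoCongr (OrderIso.refl (Σ i, C i))
        (punitSigmaIso.{w} T)).symm).toOrderEmbedding).trans he.some
  obtain ⟨g, hginj, hgemb⟩ := bwd_aux C e
  obtain ⟨t0⟩ := hT
  set s : ℕ → I := fun n => g t0 n with hsdef
  have hs : Function.Injective s := by
    intro a b h
    have h2 := hginj (a₁ := (t0, a)) (a₂ := (t0, b)) h
    exact congrArg Prod.snd h2
  have hchain : ∀ d a, Nonempty (C (s a) ↪o C (s (a + d))) := by
    intro d
    induction d with
    | zero => exact fun a => ⟨(OrderIso.refl _).toOrderEmbedding⟩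
    | succ d ih =>
      intro a
      have h2 : Nonempty (C (s (a + d)) ↪o C (s (a + d + 1))) := hgemb t0 (a + d)
      exact ⟨(ih a).some.trans h2.some⟩
  have hchain' : ∀ a b : ℕ, a ≤ b → Nonempty (C (s a) ↪o C (s b)) := by
    intro a b hab
    obtain ⟨d, rfl⟩ := Nat.exists_eq_add_of_le hab
    exact hchain d a
  let u : ∀ k : ℕ, DkT C s k ↪o ((Σ i, C i) ⊕ (Σ _ : T, PUnit.{v+1})) :=
    fun k => (dkEmb C s hs k).trans (inlEmb _ _)
  let v' : ∀ k : ℕ, ((Σ i, C i) ⊕ (Σ _ : T, PUnit.{v+1})) ↪o DkT C s k :=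
    fun k => e.trans (alphaToDk C s hs hchain' k)
  have hequim : ∀ k, Equimorphic (Set.range (u k)) ((Σ i, C i) ⊕ (Σ _ : T, PUnit.{v+1})) := by
    intro k
    constructor
    · exact ⟨OrderEmbedding.subtype _⟩
    · exact ⟨(v' k).trans (rangeOrderIso (u k)).toOrderEmbedding⟩
  have hcount : ∀ k k' : ℕ, (DkT C s k ≃o DkT C s k') → k = k' := by
    intro k k' f
    obtain ⟨e1⟩ := isol_fin (fun i : SubIdx s k => C i.1) k
    obtain ⟨e2⟩ := isol_fin (fun i : SubIdx s k' => C i.1) k'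
    exact Fin.equiv_iff_eq.mp ⟨e1.symm.trans ((isolEquiv f).trans e2)⟩
  have hinj : Function.Injective (fun k : ℕ =>
      (Quotient.mk (sibSetoid ((Σ i, C i) ⊕ (Σ _ : T, PUnit.{v+1})))
        ⟨Set.range (u k), hequim k⟩)) := by
    intro k k' h
    obtain ⟨f⟩ := Quotient.exact h
    exact hcount k k' ((rangeOrderIso (u k)).trans (f.trans (rangeOrderIso (u k')).symm))
  unfold sibNumber
  have hInf : Infinite (Quotient (sibSetoid ((Σ i, C i) ⊕ (Σ _ : T, PUnit.{v+1})))) :=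
    Infinite.of_injective _ hinj
  exact Cardinal.infinite_iff.mp hInf

end SibAux

theorem pairwise_disjoint_increasing_iff_embeds (I T : Type) (C : I → Type)
    [∀ i, LinearOrder (C i)] [∀ i, Nonempty (C i)] [∀ i, Nontrivial (C i)]
    (hT : Nonempty T) :
    ((∃ g : T → ℕ → I,
        Function.Injective (fun p : T × ℕ => g p.1 p.2) ∧
        ∀ (t : T) (n : ℕ), Nonempty (C (g t n) ↪o C (g t (n + 1)))) ↔
      Nonempty (((Σ i, C i) ⊕ (Σ _ : T, PUnit)) ↪o Σ i, C i)) ∧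
    (Nonempty (((Σ i, C i) ⊕ (Σ _ : T, PUnit)) ↪o Σ i, C i) →
      ℵ₀ ≤ sibNumber ((Σ i, C i) ⊕ (Σ _ : T, PUnit))) :=
  ⟨⟨fun ⟨g, h1, h2⟩ => SibAux.fwd_aux C g h1 h2, fun ⟨e⟩ => SibAux.bwd_aux C e⟩,
    fun he => SibAux.sib_aux C hT he⟩
end

section
/- Let D be a direct sum of chains (of any cardinality) such that there is no infinite increasing (under embeddability) sequence of non-trivial components and every component of D has exactly one sibling up to isomorphism. Then D has exactly one sibling up to isomorphism. -/
open Cardinal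

section Aux

variable {α β : Type*}

/-- An order embedding is an order isomorphism onto its range. -/
noncomputable def OrderEmbedding.isoRange [Preorder α] [Preorder β] (e : α ↪o β) :
    α ≃o Set.range e :=
  { toEquiv := Equiv.ofInjective e e.injective
    map_rel_iff' := by
      intro a b
      simp only [Equiv.ofInjective_apply, Subtype.mk_le_mk]
      exact e.map_rel_iff }

lemma equim_univ (α : Type*) [Preorder α] : Equimorphic (Set.univ : Set α) α :=
  ⟨⟨(OrderIso.Set.univ).toOrderEmbedding⟩, ⟨(OrderIso.Set.univ).symm.toOrderEmbedding⟩⟩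

/-- The sandwich lemma: if `sibNumber α = 1` and `α ↪o X ↪o α` then `X ≃o α`. -/
lemma sandwich {α X : Type*} [Preorder α] [Preorder X] (h1 : sibNumber α = 1)
    (e1 : α ↪o X) (e2 : X ↪o α) : Nonempty (X ≃o α) := by
  rw [sibNumber, Cardinal.eq_one_iff_unique] at h1
  obtain ⟨hsub, -⟩ := h1
  set R : Set α := Set.range e2 with hR
  have isoXR : X ≃o R := e2.isoRange
  have hrel : Nonempty ((R : Set α) ≃o (Set.univ : Set α)) :=
    Quotient.eq''.1 (hsub.elim
      (Quotient.mk'' ⟨R, ⟨⟨OrderEmbedding.subtype _⟩, ⟨e1.trans isoXR.toOrderEmbedding⟩⟩⟩)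
      (Quotient.mk'' ⟨Set.univ, equim_univ α⟩))
  obtain ⟨e⟩ := hrel
  exact ⟨isoXR.trans (e.trans OrderIso.Set.univ)⟩

end Aux
section Aux2
variable {α β : Type*}

lemma nontrivial_of_emb [Preorder α] [Preorder β] (e : α ↪o β) (h : Nontrivial α) :
    Nontrivial β := by
  obtain ⟨a, b, hab⟩ := h
  exact ⟨e a, e b, fun he => hab (e.injective he)⟩

lemma subsingleton_of_emb [Preorder α] [Preorder β] (e : α ↪o β) (h : Subsingleton β) :
    Subsingleton α :=
  ⟨fun a b => e.injective (h.elim _ _)⟩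

lemma iso_of_subsingleton [Preorder α] [Preorder β] (hsa : Subsingleton α)
    (hsb : Subsingleton β) (ha : Nonempty α) (hb : Nonempty β) : Nonempty (α ≃o β) := by
  obtain ⟨a⟩ := ha; obtain ⟨b⟩ := hb
  refine ⟨{ toFun := fun _ => b, invFun := fun _ => a,
            left_inv := fun x => Subsingleton.elim _ _,
            right_inv := fun x => Subsingleton.elim _ _,
            map_rel_iff' := ?_ }⟩
  intro x y
  simp only [Equiv.coe_fn_mk]
  constructor
  · intro _; rw [Subsingleton.elim x y]
  · intro _; exact le_rfl

lemma inj_orbit {K : Type*} {ρ : K → K} (hρ : Function.Injective ρ) (k : K)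
    (h : ∀ m, 0 < m → ρ^[m] k ≠ k) : Function.Injective fun n => ρ^[n] k := by
  have key : ∀ m n : ℕ, m < n → ρ^[m] k = ρ^[n] k → False := by
    intro m n hlt hmn
    apply h (n - m) (by omega)
    apply hρ.iterate m
    rw [← Function.iterate_add_apply, Nat.add_sub_cancel' (le_of_lt hlt)]
    exact hmn.symm
  intro m n hmn
  simp only at hmn
  rcases Nat.lt_trichotomy m n with h1 | h1 | h1
  · exact absurd (key m n h1 hmn) not_false
  · exact h1
  · exact absurd (key n m h1 hmn.symm) not_false

end Aux2

section KeyL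
variable {K : Type*}

lemma keyL (A B : K → Type*) [∀ k, LinearOrder (A k)] [∀ k, LinearOrder (B k)]
    [∀ k, Nonempty (A k)] (ρ : K → K) (hρ : Function.Injective ρ)
    (u : ∀ k, A k ↪o B k) (v : ∀ k, B k ↪o A (ρ k))
    (hno : ¬ ∃ g : ℕ → K, Function.Injective g ∧ (∀ n, Nontrivial (A (g n))) ∧
      ∀ n, g (n + 1) = ρ (g n))
    (hsib : ∀ k, sibNumber (A k) = 1 ∨ sibNumber (B k) = 1) (k : K) :
    Nonempty (A k ≃o B k) := by
  have step : ∀ j, A j ↪o A (ρ j) := fun j => (u j).trans (v j)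
  have chain : ∀ n j, Nonempty (A j ↪o A (ρ^[n] j)) := by
    intro n
    induction n with
    | zero => exact fun j => ⟨(OrderIso.refl (A j)).toOrderEmbedding⟩
    | succ n ih =>
      intro j
      obtain ⟨e⟩ := ih j
      rw [Function.iterate_succ_apply']
      exact ⟨e.trans (step _)⟩
  by_cases hper : ∃ m, 0 < m ∧ ρ^[m] k = k
  · obtain ⟨m, hm, hfix⟩ := hper
    obtain ⟨c⟩ := chain (m - 1) (ρ k)
    have hidx : ρ^[m - 1] (ρ k) = k := by
      rw [← Function.iterate_succ_apply]
      have h2 : (m - 1).succ = m := by omega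
      rw [h2]
      exact hfix
    rw [hidx] at c
    have hBA : B k ↪o A k := (v k).trans c
    rcases hsib k with h1 | h1
    · obtain ⟨e⟩ := sandwich h1 (u k) hBA
      exact ⟨e.symm⟩
    · exact sandwich h1 hBA (u k)
  · push_neg at hper
    have horb : Function.Injective fun n => ρ^[n] k :=
      inj_orbit hρ k fun m hm => hper m hm
    have hsub : ∀ n, Subsingleton (A (ρ^[n] k)) := by
      by_contra hns
      push_neg at hns
      obtain ⟨n₀, hn₀⟩ := hns
      apply hno
      refine ⟨fun n => ρ^[n₀ + n] k, ?_, ?_, ?_⟩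
      · intro a b hab
        have := horb hab
        omega
      · intro n
        induction n with
        | zero => simpa using hn₀
        | succ n ih =>
          show Nontrivial (A (ρ^[n₀ + (n + 1)] k))
          rw [Nat.add_succ, Function.iterate_succ_apply']
          exact nontrivial_of_emb (step _) ih
      · intro n
        simp only
        rw [Nat.add_succ, Function.iterate_succ_apply']
    have h0 : Subsingleton (A k) := by simpa using hsub 0
    have h1 : Subsingleton (A (ρ k)) := by simpa using hsub 1
    have hBk : Subsingleton (B k) := subsingleton_of_emb (v k) h1
    exact iso_of_subsingleton h0 hBk inferInstance ⟨u k (Classical.arbitrary _)⟩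

end KeyL

section Fiber
variable {I K : Type*}

lemma sigma_eta {B : K → Type*} (p : Σ k, B k) {k : K} (h : p.1 = k) :
    (⟨k, h ▸ p.2⟩ : Σ k, B k) = p := by
  cases p; subst h; rfl

lemma sigma_comp_of_eq_fst {B : K → Type*} [∀ k, LinearOrder (B k)] {p q : Σ k, B k}
    (h : p.1 = q.1) : p ≤ q ∨ q ≤ p := by
  cases p with
  | mk k a =>
    cases q with
    | mk l b =>
      cases h
      rcases le_total a b with h | h
      · exact Or.inl (Sigma.mk_le_mk_iff.2 h)
      · exact Or.inr (Sigma.mk_le_mk_iff.2 h)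

/-- A map into a sigma type that lands in one fiber and respects order gives an embedding
into that fiber. -/
def embOfFiber {A1 : Type*} [PartialOrder A1] {B : K → Type*} [∀ k, Preorder (B k)]
    (F : A1 → Σ k, B k) (hmono : ∀ x y, F x ≤ F y ↔ x ≤ y) (k : K)
    (hfib : ∀ x, (F x).1 = k) : A1 ↪o B k := by
  refine OrderEmbedding.ofMapLEIff (fun x => (hfib x) ▸ (F x).2) ?_
  intro x y
  rw [← Sigma.mk_le_mk_iff (i := k), sigma_eta _ (hfib x), sigma_eta _ (hfib y)]
  exact hmono x y

lemma fiberAnalysis {A : I → Type*} {B : K → Type*} [∀ i, LinearOrder (A i)]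
    [∀ k, LinearOrder (B k)] [∀ i, Nonempty (A i)]
    (f : (Σ i, A i) ↪o (Σ k, B k)) :
    ∃ σ : I → K, Function.Injective σ ∧ ∀ i, Nonempty (A i ↪o B (σ i)) := by
  classical
  have key : ∀ i (x y : A i), (f ⟨i, x⟩).1 = (f ⟨i, y⟩).1 := by
    intro i x y
    rcases le_total x y with h | h
    · obtain ⟨h1, -⟩ := Sigma.le_def.1 (f.monotone (Sigma.mk_le_mk_iff.2 h))
      exact h1
    · obtain ⟨h1, -⟩ := Sigma.le_def.1 (f.monotone (Sigma.mk_le_mk_iff.2 h))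
      exact h1.symm
  refine ⟨fun i => (f ⟨i, Classical.arbitrary (A i)⟩).1, ?_, ?_⟩
  · intro i j hij
    have hcomp : f ⟨i, Classical.arbitrary (A i)⟩ ≤ f ⟨j, Classical.arbitrary (A j)⟩ ∨
        f ⟨j, Classical.arbitrary (A j)⟩ ≤ f ⟨i, Classical.arbitrary (A i)⟩ :=
      sigma_comp_of_eq_fst hij
    rcases hcomp with h | h
    · obtain ⟨h1, -⟩ := Sigma.le_def.1 (f.le_iff_le.1 h)
      exact h1
    · obtain ⟨h1, -⟩ := Sigma.le_def.1 (f.le_iff_le.1 h)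
      exact h1.symm
  · intro i
    refine ⟨embOfFiber (fun x => f ⟨i, x⟩) ?_ _ (fun x => key i x _)⟩
    intro x y
    rw [f.le_iff_le, Sigma.mk_le_mk_iff]

end Fiber

section SB

lemma mySB {α β : Type*} (f : α → β) (g : β → α) (hf : Function.Injective f)
    (hg : Function.Injective g) : ∃ h : α ≃ β, ∀ a, h a = f a ∨ g (h a) = a := by
  classical
  by_cases hβ : Nonempty β
  swap
  · haveI : IsEmpty β := not_nonempty_iff.1 hβ
    haveI : IsEmpty α := ⟨fun a => hβ ⟨f a⟩⟩
    exact ⟨Equiv.equivOfIsEmpty α β, fun a => isEmptyElim a⟩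
  haveI := hβ
  set A : Set α := ⋃ n : ℕ, (g ∘ f)^[n] '' (Set.range g)ᶜ with hA
  have hA0 : ∀ a, a ∉ A → a ∈ Set.range g := by
    intro a ha
    by_contra h'
    exact ha (Set.mem_iUnion.2 ⟨0, by simpa using h'⟩)
  have hAstep : ∀ a ∈ A, g (f a) ∈ A := by
    intro a ha
    obtain ⟨n, x, hx, rfl⟩ : ∃ n x, x ∈ (Set.range g)ᶜ ∧ (g ∘ f)^[n] x = a := by
      simpa [hA, Set.mem_iUnion] using ha
    refine Set.mem_iUnion.2 ⟨n + 1, ⟨x, hx, ?_⟩⟩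
    rw [Function.iterate_succ_apply']
    rfl
  set h0 : α → β := fun a => if a ∈ A then f a else Function.invFun g a with hh0
  have happ : ∀ a, (a ∈ A → h0 a = f a) ∧ (a ∉ A → h0 a = Function.invFun g a) := by
    intro a
    constructor
    · intro ha; simp only [hh0, if_pos ha]
    · intro ha; simp only [hh0, if_neg ha]
  have hinj : Function.Injective h0 := by
    intro a b hab
    by_cases ha : a ∈ A <;> by_cases hb : b ∈ A
    · rw [(happ a).1 ha, (happ b).1 hb] at hab
      exact hf hab
    · exfalso
      rw [(happ a).1 ha, (happ b).2 hb] at hab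
      have hgb : g (f a) = b := by rw [hab]; exact Function.invFun_eq (hA0 b hb)
      exact hb (hgb ▸ hAstep a ha)
    · exfalso
      rw [(happ a).2 ha, (happ b).1 hb] at hab
      have hga : g (f b) = a := by rw [← hab]; exact Function.invFun_eq (hA0 a ha)
      exact ha (hga ▸ hAstep b hb)
    · rw [(happ a).2 ha, (happ b).2 hb] at hab
      have h1 : g (Function.invFun g a) = a := Function.invFun_eq (hA0 a ha)
      have h2 : g (Function.invFun g b) = b := Function.invFun_eq (hA0 b hb)
      rw [← h1, ← h2, hab]
  have hsurj : Function.Surjective h0 := by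
    intro b
    by_cases hgb : g b ∈ A
    · obtain ⟨n, x, hx, hxe⟩ : ∃ n x, x ∈ (Set.range g)ᶜ ∧ (g ∘ f)^[n] x = g b := by
        simpa [hA, Set.mem_iUnion] using hgb
      cases n with
      | zero =>
        exfalso
        exact hx ⟨b, by simpa using hxe.symm⟩
      | succ m =>
        rw [Function.iterate_succ_apply'] at hxe
        have hb' : f ((g ∘ f)^[m] x) = b := hg hxe
        have hmem : (g ∘ f)^[m] x ∈ A := Set.mem_iUnion.2 ⟨m, ⟨x, hx, rfl⟩⟩
        exact ⟨(g ∘ f)^[m] x, by rw [(happ _).1 hmem, hb']⟩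
    · refine ⟨g b, ?_⟩
      rw [(happ _).2 hgb]
      exact Function.leftInverse_invFun hg b
  refine ⟨Equiv.ofBijective h0 ⟨hinj, hsurj⟩, ?_⟩
  intro a
  by_cases ha : a ∈ A
  · left
    show h0 a = f a; rw [(happ a).1 ha]
  · right
    show g (h0 a) = a; rw [(happ a).2 ha]
    exact Function.invFun_eq (hA0 a ha)

end SB

section SigmaIso
variable {I J : Type*}

/-- Congruence of disjoint-sum orders along an index bijection and fiberwise isos. -/
noncomputable def sigmaOrderIsoCongr {A : I → Type*} {B : J → Type*} [∀ i, Preorder (A i)]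
    [∀ j, Preorder (B j)] (e : I ≃ J) (F : ∀ i, A i ≃o B (e i)) :
    (Σ i, A i) ≃o (Σ j, B j) := by
  have hbij : Function.Bijective (fun p : Σ i, A i => (⟨e p.1, F p.1 p.2⟩ : Σ j, B j)) := by
    constructor
    · rintro ⟨i, a⟩ ⟨i', a'⟩ hpq
      simp only at hpq
      have h1 : e i = e i' := congrArg Sigma.fst hpq
      obtain rfl : i = i' := e.injective h1
      have h2 : F i a = F i a' := sigma_mk_injective hpq
      rw [(F i).injective h2]
    · rintro ⟨j, b⟩
      obtain ⟨j', rfl⟩ : ∃ j', e j' = j := ⟨e.symm j, e.apply_symm_apply j⟩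
      exact ⟨⟨j', (F j').symm b⟩, by simp⟩
  refine ⟨Equiv.ofBijective _ hbij, ?_⟩
  rintro ⟨i, a⟩ ⟨i', a'⟩
  show (⟨e i, F i a⟩ : Σ j, B j) ≤ ⟨e i', F i' a'⟩ ↔ _
  constructor
  · intro hle
    obtain ⟨h, -⟩ := Sigma.le_def.1 hle
    obtain rfl : i = i' := e.injective h
    exact Sigma.mk_le_mk_iff.2 ((F i).le_iff_le.1 (Sigma.mk_le_mk_iff.1 hle))
  · intro hle
    obtain ⟨h, -⟩ := Sigma.le_def.1 hle
    obtain rfl : i = i' := h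
    exact Sigma.mk_le_mk_iff.2 ((F i).le_iff_le.2 (Sigma.mk_le_mk_iff.1 hle))

variable {C : I → Type*} [∀ i, LinearOrder (C i)]

/-- The fibers of a subset of a disjoint sum. -/
def fib (S : Set (Σ i, C i)) (i : I) : Set (C i) := {x | (⟨i, x⟩ : Σ i, C i) ∈ S}

/-- A subset of a disjoint sum is order-isomorphic to the disjoint sum of its fibers. -/
def isoFib (S : Set (Σ i, C i)) : (Σ i, ↥(fib S i)) ≃o ↥S where
  toFun p := ⟨⟨p.1, p.2.1⟩, p.2.2⟩
  invFun s := ⟨s.1.1, ⟨s.1.2, s.2⟩⟩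
  left_inv := fun ⟨i, x, hx⟩ => rfl
  right_inv := fun ⟨⟨i, x⟩, h⟩ => rfl
  map_rel_iff' := by
    rintro ⟨i, x, hx⟩ ⟨i', x', hx'⟩
    show (⟨i, x⟩ : Σ i, C i) ≤ ⟨i', x'⟩ ↔ (⟨i, (⟨x, hx⟩ : fib S i)⟩ : Σ i, ↥(fib S i)) ≤ ⟨i', ⟨x', hx'⟩⟩
    constructor
    · intro hle
      obtain ⟨h, -⟩ := Sigma.le_def.1 hle
      obtain rfl : i = i' := h
      exact (Sigma.mk_le_mk_iff (α := fun i => ↥(fib S i))).2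
        (Subtype.mk_le_mk.2 (Sigma.mk_le_mk_iff.1 hle))
    · intro hle
      obtain ⟨h, -⟩ := Sigma.le_def.1 hle
      obtain rfl : i = i' := congrArg id h
      exact Sigma.mk_le_mk_iff.2
        (Subtype.mk_le_mk.1 ((Sigma.mk_le_mk_iff (α := fun i => ↥(fib S i))).1 hle))

/-- Dropping empty fibers. -/
def isoNonemptyFib (T : ∀ i, Set (C i)) :
    (Σ j : {i : I // (T i).Nonempty}, ↥(T j.1)) ≃o (Σ i, ↥(T i)) where
  toFun p := ⟨p.1.1, p.2⟩
  invFun q := ⟨⟨q.1, ⟨q.2.1, q.2.2⟩⟩, q.2⟩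
  left_inv := fun ⟨⟨i, hi⟩, x⟩ => rfl
  right_inv := fun ⟨i, x⟩ => rfl
  map_rel_iff' := by
    rintro ⟨⟨i, hi⟩, x⟩ ⟨⟨i', hi'⟩, x'⟩
    show (⟨i, x⟩ : Σ i, ↥(T i)) ≤ ⟨i', x'⟩ ↔ _
    constructor
    · intro hle
      obtain ⟨h, -⟩ := Sigma.le_def.1 hle
      obtain rfl : i = i' := h
      exact (Sigma.mk_le_mk_iff (α := fun j : {i : I // (T i).Nonempty} => ↥(T j.1))
        (i := ⟨i, hi⟩)).2 ((Sigma.mk_le_mk_iff (α := fun i => ↥(T i)) (i := i)).1 hle)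
    · intro hle
      obtain ⟨h, -⟩ := Sigma.le_def.1 hle
      have h2 : i = i' := congrArg Subtype.val h
      obtain rfl : i = i' := h2
      obtain rfl : hi = hi' := rfl
      exact Sigma.mk_le_mk_iff.2
        ((Sigma.mk_le_mk_iff (α := fun j : {i : I // (T i).Nonempty} => ↥(T j.1))
          (i := ⟨i, hi⟩)).1 hle)

end SigmaIso

theorem sib_one_of_no_increasing_sequence (I : Type) (C : I → Type)
    [∀ i, LinearOrder (C i)] [∀ i, Nonempty (C i)]
    (hno : ¬ ∃ g : ℕ → I, Function.Injective g ∧ (∀ n, Nontrivial (C (g n))) ∧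
        ∀ n, Nonempty (C (g n) ↪o C (g (n + 1))))
    (hone : ∀ i, sibNumber (C i) = 1) :
    sibNumber (Σ i, C i) = 1 := by
  classical
  have main : ∀ S : Set (Σ i, C i), Equimorphic S (Σ i, C i) → Nonempty (↥S ≃o (Σ i, C i)) := by
    intro S hS
    obtain ⟨⟨gS⟩, ⟨fS⟩⟩ := hS
    haveI : ∀ j : {i : I // (fib S i).Nonempty}, Nonempty ↥(fib S j.1) :=
      fun j => j.2.to_subtype
    have isoS : (Σ i, ↥(fib S i)) ≃o ↥S := isoFib S
    have isoJ : (Σ j : {i : I // (fib S i).Nonempty}, ↥(fib S j.1)) ≃o (Σ i, ↥(fib S i)) :=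
      isoNonemptyFib (fun i => fib S i)
    have f'' : (Σ i, C i) ↪o (Σ j : {i : I // (fib S i).Nonempty}, ↥(fib S j.1)) :=
      (fS.trans isoS.symm.toOrderEmbedding).trans isoJ.symm.toOrderEmbedding
    have g'' : (Σ j : {i : I // (fib S i).Nonempty}, ↥(fib S j.1)) ↪o (Σ i, C i) :=
      (isoJ.toOrderEmbedding.trans isoS.toOrderEmbedding).trans gS
    obtain ⟨σ, hσinj, hE⟩ := fiberAnalysis f''
    have E : ∀ i, C i ↪o ↥(fib S (σ i).1) := fun i => Classical.choice (hE i)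
    obtain ⟨τ, hτinj, hG⟩ := fiberAnalysis g''
    have G : ∀ j, ↥(fib S j.1) ↪o C (τ j) := fun j => Classical.choice (hG j)
    have claim1 : ∀ i, Nonempty (C i ≃o ↥(fib S (σ i).1)) := by
      intro i
      refine keyL C (fun i => ↥(fib S (σ i).1)) (fun i => τ (σ i))
        (fun a b hab => hσinj (hτinj hab)) E (fun i => G (σ i)) ?_
        (fun i => Or.inl (hone i)) i
      rintro ⟨g, hg1, hg2, hg3⟩
      apply hno
      refine ⟨g, hg1, hg2, fun n => ?_⟩
      have e := (E (g n)).trans (G (σ (g n)))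
      have hg3' : g (n + 1) = τ (σ (g n)) := hg3 n
      rw [← hg3'] at e
      exact ⟨e⟩
    have claim2 : ∀ j, Nonempty (↥(fib S j.1) ≃o C (τ j)) := by
      intro j
      refine keyL (fun j : {i : I // (fib S i).Nonempty} => ↥(fib S j.1))
        (fun j => C (τ j)) (fun j => σ (τ j))
        (fun a b hab => hτinj (hσinj hab)) G (fun j => E (τ j)) ?_
        (fun j => Or.inr (hone (τ j))) j
      rintro ⟨g, hg1, hg2, hg3⟩
      apply hno
      refine ⟨fun n => τ (g n), fun a b hab => hg1 (hτinj hab), fun n => ?_, fun n => ?_⟩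
      · exact nontrivial_of_emb (G (g n)) (hg2 n)
      · have e := (E (τ (g n))).trans (G (σ (τ (g n))))
        have hg3' : g (n + 1) = σ (τ (g n)) := hg3 n
        rw [← hg3'] at e
        exact ⟨e⟩
    obtain ⟨h, hh⟩ := mySB σ τ hσinj hτinj
    have F : ∀ i, Nonempty (C i ≃o ↥(fib S (h i).1)) := by
      intro i
      rcases hh i with hcase | hcase
      · rw [hcase]; exact claim1 i
      · obtain ⟨e⟩ := claim2 (h i)
        rw [hcase] at e
        exact ⟨e.symm⟩
    have iso1 : (Σ i, C i) ≃o (Σ j : {i : I // (fib S i).Nonempty}, ↥(fib S j.1)) :=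
      sigmaOrderIsoCongr h (fun i => Classical.choice (F i))
    exact ⟨(isoS.symm.trans isoJ.symm).trans iso1.symm⟩
  rw [sibNumber, Cardinal.eq_one_iff_unique]
  constructor
  · constructor
    intro q1 q2
    refine Quotient.inductionOn₂ q1 q2 ?_
    rintro ⟨S1, h1⟩ ⟨S2, h2⟩
    refine Quotient.sound ?_
    obtain ⟨e1⟩ := main S1 h1
    obtain ⟨e2⟩ := main S2 h2
    exact ⟨e1.trans e2.symm⟩
  · exact ⟨Quotient.mk'' ⟨Set.univ, equim_univ _⟩⟩
end
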